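/- There is an absolute constant C* ≥ 1 such that the following holds. Let α ∈ ℝ be irrational, let A ∈ SL(2,ℝ) be either the rotation R_ϱ for some ϱ ∈ ℝ or the parabolic matrix [[1, c*],[0, 1]] with |c*| ≤ 1, and let F : 𝕋 → M₂(ℝ) be continuous with I + F(θ) ∈ SL(2,ℝ) for all θ; set Ã(θ) = A(I + F(θ)). Then for every integer m with 0 ≤ m and 64 m³ ‖F‖_{C⁰} ≤ 1, and for every (θ, φ) ∈ 𝕋 × ℝP¹: d(T_{(α,A)}^m(θ, φ), T_{(α,Ã)}^m(θ, φ)) ≤ 16 C* m³ ‖A^m‖⁴ ‖F‖_{C⁰}. -/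

import Mathlib

open Filter MeasureTheory Matrix
open scoped Real Topology ENNReal

noncomputable section

namespace Paper

/-- The circle `ℝ/ℤ`. -/
abbrev T1 := AddCircle (1 : ℝ)
/-- The projective line `ℝP¹`, identified with `ℝ/(1/2)ℤ`. -/
abbrev RP1 := AddCircle ((1 : ℝ) / 2)
abbrev M2R := Matrix (Fin 2) (Fin 2) ℝ
abbrev M2C := Matrix (Fin 2) (Fin 2) ℂ

instance : Fact ((0:ℝ) < 1) := ⟨one_pos⟩
instance : Fact ((0:ℝ) < 1 / 2) := ⟨by norm_num⟩

/-- canonical representative of a point of `𝕋` in `[0,1)` -/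
def rep1 (x : T1) : ℝ := (AddCircle.equivIco 1 0 x : ℝ)

/-- canonical representative of a point of `ℝP¹` in `[0,1/2)` -/
def repHalf (φ : RP1) : ℝ := (AddCircle.equivIco (1/2) 0 φ : ℝ)

/-- Euclidean operator norm of a real 2×2 matrix. -/
def opNorm (M : M2R) : ℝ :=
  ‖LinearMap.toContinuousLinearMap (Matrix.toEuclideanLin M)‖

/-- Euclidean operator norm of a complex 2×2 matrix. -/
def opNormC (M : M2C) : ℝ :=
  ‖LinearMap.toContinuousLinearMap (Matrix.toEuclideanLin M)‖

/-- unit vector of angle `2πt` -/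
def dirVec (t : ℝ) : EuclideanSpace ℝ (Fin 2) :=
  (WithLp.equiv 2 (Fin 2 → ℝ)).symm ![Real.cos (2*π*t), Real.sin (2*π*t)]

/-- the class in `ℝP¹ = ℝ/(1/2)ℤ` of the line spanned by a (nonzero) vector `v`:
the angle of `v` divided by `2π`, modulo `1/2`. -/
def lineClass (v : EuclideanSpace ℝ (Fin 2)) : RP1 :=
  ((Complex.arg (v 0 + v 1 * Complex.I) / (2*π) : ℝ) : RP1)

/-- the Möbius (projective) action of a matrix on `ℝP¹`. -/
def projAct (M : M2R) (φ : RP1) : RP1 :=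
  lineClass (Matrix.toEuclideanLin M (dirVec (repHalf φ)))

/-- projective skew product `(x,φ) ↦ (x+a, A(x)·φ)` for `A : 𝕋 → SL(2,ℝ)`. -/
def TprojT (a : T1) (A : T1 → M2R) : T1 × RP1 → T1 × RP1 :=
  fun p => (p.1 + a, projAct (A p.1) p.2)

/-- projective skew product for a map given as a `±`-periodic map on `ℝ`. -/
def TprojR (a : T1) (B : ℝ → M2R) : T1 × RP1 → T1 × RP1 :=
  fun p => (p.1 + a, projAct (B (rep1 p.1)) p.2)

/-- Möbius disjointness for a transformation of `𝕋 × ℝP¹`. -/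
def MobiusDisjoint (T : T1 × RP1 → T1 × RP1) : Prop :=
  ∀ f : T1 × RP1 → ℂ, Continuous f → ∀ p : T1 × RP1,
    Tendsto (fun N : ℕ => (N : ℂ)⁻¹ * ∑ n ∈ Finset.Icc 1 N,
      ((ArithmeticFunction.moebius n : ℤ) : ℂ) * f (T^[n] p)) atTop (𝓝 0)

/-- holomorphic on the horizontal strip of half-width `h`, entrywise -/
def HoloStrip (h : ℝ) (F : ℂ → M2C) : Prop :=
  ∀ i j, DifferentiableOn ℂ (fun z => F z i j) {z : ℂ | |z.im| < h}

/-- 1-periodic -/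
def Per1 (F : ℂ → M2C) : Prop := ∀ z, F (z + 1) = F z

/-- `sup`-bound on the strip, i.e. `‖F‖_h ≤ b`. -/
def StripBound (h : ℝ) (F : ℂ → M2C) (b : ℝ) : Prop :=
  ∀ z : ℂ, |z.im| < h → opNormC (F z) ≤ b

def ExtendsT (F : ℂ → M2C) (A : T1 → M2R) : Prop :=
  ∀ x : ℝ, F (x : ℂ) = (A (x : T1)).map Complex.ofReal

def ExtendsR (F : ℂ → M2C) (B : ℝ → M2R) : Prop :=
  ∀ x : ℝ, F (x : ℂ) = (B x).map Complex.ofReal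

/-- `A : 𝕋 → SL(2,ℝ)` is (real-)analytic: it extends to a bounded holomorphic
1-periodic map on some strip. -/
def TorusAnalytic (A : T1 → M2R) : Prop :=
  ∃ h : ℝ, 0 < h ∧ ∃ F : ℂ → M2C, HoloStrip h F ∧ Per1 F ∧
    (∃ b, StripBound h F b) ∧ ExtendsT F A

def RealAnalyticM (B : ℝ → M2R) : Prop :=
  ∀ (i j : Fin 2) (x : ℝ), AnalyticAt ℝ (fun t => B t i j) x

def PMPeriodic (B : ℝ → M2R) : Prop := ∀ x, B (x + 1) = B x ∨ B (x + 1) = - B x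

def Per1R (B : ℝ → M2R) : Prop := ∀ x, B (x + 1) = B x

def SL2V {X : Type*} (B : X → M2R) : Prop := ∀ x, (B x).det = 1

/-- `(α,A)` is (C^ω-)almost reducible. -/
def AlmostReducible (α : ℝ) (A : T1 → M2R) : Prop :=
  ∀ ε : ℝ, 0 < ε → ∃ (B : ℝ → M2R) (D : M2R), D.det = 1 ∧
    RealAnalyticM B ∧ SL2V B ∧ PMPeriodic B ∧
    ∀ x : ℝ, opNorm ((B (x + α))⁻¹ * A (x : T1) * B x - D) < ε

/-- `(α,A)` is reducible. -/
def Reducible (α : ℝ) (A : T1 → M2R) : Prop :=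
  ∃ (B : ℝ → M2R) (D : M2R), D.det = 1 ∧
    RealAnalyticM B ∧ SL2V B ∧ PMPeriodic B ∧
    ∀ x : ℝ, (B (x + α))⁻¹ * A (x : T1) * B x = D

/-- forward cocycle iterates `A_n(x) = A(x+(n-1)α)⋯A(x)`. -/
def fwdA (α : ℝ) (A : T1 → M2R) : ℕ → T1 → M2R
  | 0, _ => 1
  | n + 1, x => A (x + (((n : ℝ) * α : ℝ) : T1)) * fwdA α A n x

/-- backward cocycle iterates `A_{-n}(x) = A(x-nα)⁻¹⋯A(x-α)⁻¹`. -/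
def bwdA (α : ℝ) (A : T1 → M2R) : ℕ → T1 → M2R
  | 0, _ => 1
  | n + 1, x => (A (x - (((n + 1 : ℕ) * α : ℝ) : T1)))⁻¹ * bwdA α A n x

/-- uniform hyperbolicity of the cocycle `(α, A)`, phrased with continuous
stable/unstable line fields (a continuous invariant splitting of `ℝ²`). -/
def UniformlyHyperbolic (α : ℝ) (A : T1 → M2R) : Prop :=
  ∃ Es Eu : T1 → RP1, Continuous Es ∧ Continuous Eu ∧ (∀ x, Es x ≠ Eu x) ∧
    ∃ C : ℝ, 0 < C ∧ ∃ lam : ℝ, 0 < lam ∧ lam < 1 ∧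
      ∀ (x : T1) (n : ℕ), 1 ≤ n →
        (∀ t : ℝ, ‖Matrix.toEuclideanLin (fwdA α A n x) (t • dirVec (repHalf (Es x)))‖
            ≤ C * lam ^ n * ‖t • dirVec (repHalf (Es x))‖) ∧
        (∀ t : ℝ, ‖Matrix.toEuclideanLin (bwdA α A n x) (t • dirVec (repHalf (Eu x)))‖
            ≤ C * lam ^ n * ‖t • dirVec (repHalf (Eu x))‖)

/-- Gauss-map iterates: `α₀ = {α}`, `α_{n+1} = {α_n⁻¹}`. -/
def gaussIter (α : ℝ) : ℕ → ℝ
  | 0 => Int.fract α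
  | n + 1 => Int.fract (gaussIter α n)⁻¹

/-- continued fraction partial quotients `a_k` (for `k ≥ 1`). -/
def cfa (α : ℝ) (k : ℕ) : ℤ := ⌊(gaussIter α (k - 1))⁻¹⌋

/-- continued fraction denominators `q_k`. -/
def cfq (α : ℝ) : ℕ → ℤ
  | 0 => 1
  | 1 => cfa α 1
  | (k + 2) => cfa α (k + 2) * cfq α (k + 1) + cfq α k

/-- `β(α) = limsup (ln q_{k+1})/q_k`, valued in `[0,∞]`. -/
def betaAlpha (α : ℝ) : ℝ≥0∞ :=
  Filter.atTop.limsup fun k : ℕ => ENNReal.ofReal (Real.log (cfq α (k+1)) / (cfq α k))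

/-- `(q_l, q_n)` is a CD(𝒜,ℬ,𝒞) bridge. -/
def CDBridge (α : ℝ) (a b c : ℝ) (l n : ℕ) : Prop :=
  l ≤ n ∧ (∀ i : ℕ, l ≤ i → i < n → (cfq α (i+1) : ℝ) ≤ (cfq α i : ℝ) ^ a) ∧
    (cfq α l : ℝ) ^ b ≤ (cfq α n : ℝ) ∧ (cfq α n : ℝ) ≤ (cfq α l : ℝ) ^ c

/-- the conclusion of the CD-bridge selection lemma (Lemma 2.2 / AFK) for the
subsequence `Q_k = q_{nk k}`, `Q̄_k = q_{nk k + 1}`. -/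
def CDSelection (α : ℝ) (a : ℝ) (nk : ℕ → ℕ) : Prop :=
  StrictMono nk ∧ nk 0 = 0 ∧
  (∀ k : ℕ, 1 ≤ k → (cfq α (nk k) : ℝ) ≤ (cfq α (nk (k-1) + 1) : ℝ) ^ (a^4)) ∧
  (∀ k : ℕ, 1 ≤ k →
     ((cfq α (nk k) : ℝ) ^ a ≤ (cfq α (nk k + 1) : ℝ)) ∨
     (CDBridge α a a (a^3) (nk (k-1) + 1) (nk k) ∧ CDBridge α a a (a^3) (nk k) (nk (k+1))))

/-- entrywise derivative of a matrix-valued map on `ℝ`. -/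
def matDeriv (B : ℝ → M2R) (x : ℝ) : M2R :=
  Matrix.of fun i j => deriv (fun t => B t i j) x

/-- `‖G‖_{C⁰} ≤ b` (over `ℝ`). -/
def C0R (G : ℝ → M2R) (b : ℝ) : Prop := ∀ x, opNorm (G x) ≤ b

/-- `‖B‖_{C¹} ≤ b` (over `ℝ`). -/
def C1R (B : ℝ → M2R) (b : ℝ) : Prop :=
  ∀ x, opNorm (B x) ≤ b ∧ opNorm (matDeriv B x) ≤ b

def C0T (G : T1 → M2R) (b : ℝ) : Prop := ∀ x, opNorm (G x) ≤ b

/-- `‖G‖_{C⁰}` of a map on `𝕋`. -/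
def normC0T (G : T1 → M2R) : ℝ := ⨆ x : T1, opNorm (G x)

/-- `‖B‖_{C¹}` of a map on `ℝ`. -/
def normC1R (B : ℝ → M2R) : ℝ :=
  max (⨆ x : ℝ, opNorm (B x)) (⨆ x : ℝ, opNorm (matDeriv B x))

/-- the rotation `R_ϱ`. -/
def rotM (ϱ : ℝ) : M2R :=
  !![Real.cos (2*π*ϱ), -Real.sin (2*π*ϱ); Real.sin (2*π*ϱ), Real.cos (2*π*ϱ)]

def rotMC (ϱ : ℝ) : M2C := (rotM ϱ).map Complex.ofReal

/-- the parabolic matrix `[[1,c],[0,1]]`. -/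
def parabM (c : ℝ) : M2R := !![1, c; 0, 1]

/-- the Schrödinger cocycle matrix `S_{v,E}`. -/
def schrodM (v : T1 → ℝ) (E : ℝ) (x : T1) : M2R := !![E - v x, -1; 1, 0]



-- ====== measure complexity ======

/-- Bowen average metric `d̄_n`. -/
def bowen (T : T1 × RP1 → T1 × RP1) (n : ℕ) (x y : T1 × RP1) : ℝ :=
  (n : ℝ)⁻¹ * ∑ i ∈ Finset.range n, dist (T^[i] x) (T^[i] y)

/-- `S_n(d, ρ, ε)`, the measure complexity function. -/
def Scomplexity (T : T1 × RP1 → T1 × RP1) (ρ : Measure (T1 × RP1)) (n : ℕ) (ε : ℝ) : ℕ :=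
  sInf {m : ℕ | ∃ c : Fin m → T1 × RP1,
    ρ (⋃ i, {y | bowen T n (c i) y < ε}) > ENNReal.ofReal (1 - ε)}

-- ====== disk measure and random perturbation ======

/-- normalized Lebesgue measure on the closed unit disk of `ℂ`. -/
def diskMeasure : Measure ℂ :=
  (volume (Metric.closedBall (0:ℂ) 1))⁻¹ • volume.restrict (Metric.closedBall (0:ℂ) 1)

/-- the random perturbation `w_t(x) = Σ_{m≥1} ε(m)·2 Re(t_m e^{2πimx})`. -/
def wPert (ε : ℕ → ℝ) (t : ℕ → ℂ) (x : T1) : ℝ :=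
  ∑' m : ℕ, if m = 0 then 0 else
    ε m * (2 * (t m * Complex.exp (2*π*(m:ℝ)*Complex.I*(rep1 x))).re)

-- ====== Fourier coefficients / dual operator / resonances ======

/-- Fourier coefficients `v̂(l)` of a function on `𝕋`. -/
def vhat (v : T1 → ℝ) (l : ℤ) : ℂ :=
  ∫ x in (0:ℝ)..1, (v (x : T1) : ℂ) * Complex.exp (-2*π*Complex.I*l*x)

/-- the eigenvalue equation `Ĥ_{v,α,θ} u = E u` for the dual operator. -/
def DualEigen (α : ℝ) (v : T1 → ℝ) (θ E : ℝ) (u : ℤ → ℂ) : Prop :=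
  ∀ k : ℤ, (∑' l : ℤ, vhat v l * u (k - l))
      + ((2 * Real.cos (2*π*(θ + (k:ℝ)*α)) : ℝ) : ℂ) * u k = (E : ℂ) * u k

/-- `‖x‖_𝕋 = dist(x, ℤ)`. -/
def distZ (x : ℝ) : ℝ := |x - round x|

/-- `k` is an `ε₀`-resonance of `θ`. -/
def IsResonance (α θ ε₀ : ℝ) (k : ℤ) : Prop :=
  distZ (2*θ - (k:ℝ)*α) ≤ Real.exp (-ε₀ * |(k:ℝ)|) ∧
  ∀ j : ℤ, |j| ≤ |k| → distZ (2*θ - (k:ℝ)*α) ≤ distZ (2*θ - (j:ℝ)*α)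

/-- `k, k'` are consecutive `ε₀`-resonances of `θ` (in the ordering by absolute value). -/
def AdjacentResonances (α θ ε₀ : ℝ) (k k' : ℤ) : Prop :=
  IsResonance α θ ε₀ k ∧ IsResonance α θ ε₀ k' ∧ k ≠ k' ∧ |k| ≤ |k'| ∧
  ∀ k'' : ℤ, IsResonance α θ ε₀ k'' → |k''| ≤ |k| ∨ |k'| ≤ |k''|

/-- the family `{Ĥ_{v,α,θ}}_θ` is almost localized with parameters `C₀, C₁, ε₀, ε₁`. -/
def AlmostLocalized (α : ℝ) (v : T1 → ℝ) (C₀ C₁ ε₀ ε₁ : ℝ) : Prop :=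
  ∀ (θ E : ℝ) (u : ℤ → ℂ), DualEigen α v θ E u → u 0 = 1 →
    (∀ k : ℤ, ‖u k‖ ≤ 1 + |(k:ℝ)|) →
    (∀ nj nj1 : ℤ, AdjacentResonances α θ ε₀ nj nj1 →
      ∀ k : ℤ, C₀ * (1 + |(nj:ℝ)|) ≤ |(k:ℝ)| → |(k:ℝ)| ≤ |(nj1:ℝ)| / C₀ →
        ‖u k‖ ≤ C₁ * Real.exp (-ε₁ * |(k:ℝ)|)) ∧
    (∀ nj : ℤ, IsResonance α θ ε₀ nj →
      (∀ k'' : ℤ, IsResonance α θ ε₀ k'' → |k''| ≤ |nj|) →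
      ∀ k : ℤ, C₀ * (1 + |(nj:ℝ)|) ≤ |(k:ℝ)| →
        ‖u k‖ ≤ C₁ * Real.exp (-ε₁ * |(k:ℝ)|))

/-- the truncation `u^I(x) = Σ_{k ∈ I} û_k e^{2πikx}` with
`I = [-⌊m/2⌋, m - ⌊m/2⌋]`. -/
def uI (u : ℤ → ℂ) (m : ℕ) (z : ℂ) : ℂ :=
  ∑ k ∈ Finset.Icc (-((m:ℤ)/2)) ((m:ℤ) - (m:ℤ)/2),
    u k * Complex.exp (2*π*Complex.I*k*z)

/-- `U^I(x) = (e^{2πiθ} u^I(x), u^I(x-α))ᵀ`. -/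
def UIvec (u : ℤ → ℂ) (θ α : ℝ) (m : ℕ) (z : ℂ) : Fin 2 → ℂ :=
  ![Complex.exp (2*π*Complex.I*θ) * uI u m z, uI u m (z - α)]

/-- the complexified Schrödinger matrix `S_{v,E}` on the strip. -/
def SvECmat (E : ℝ) (vc : ℂ → ℂ) (z : ℂ) : M2C := !![(E:ℂ) - vc z, -1; 1, 0]

/-- `vc` is a holomorphic 1-periodic extension of `v` to the strip of width `h`. -/
def ScalarExt (h : ℝ) (v : T1 → ℝ) (vc : ℂ → ℂ) : Prop :=
  DifferentiableOn ℂ vc {z : ℂ | |z.im| < h} ∧ (∀ z, vc (z+1) = vc z) ∧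
    ∀ x : ℝ, vc (x : ℂ) = ((v (x : T1) : ℝ) : ℂ)

/-- `v : 𝕋 → ℝ` is real-analytic. -/
def ScalarTorusAnalytic (v : T1 → ℝ) : Prop :=
  ∃ h : ℝ, 0 < h ∧ ∃ vc : ℂ → ℂ, ScalarExt h v vc ∧
    ∃ b, ∀ z : ℂ, |z.im| < h → ‖vc z‖ ≤ b

-- ====== two-frequency (continuous time) objects ======

/-- `⟨k, ω⟩ = k₁ + k₂ α` for `ω = (1, α)`. -/
def kip (k : ℤ × ℤ) (α : ℝ) : ℝ := (k.1 : ℝ) + (k.2 : ℝ) * α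

/-- `|k| = |k₁| + |k₂|`. -/
def knorm (k : ℤ × ℤ) : ℝ := ((|k.1| + |k.2| : ℤ) : ℝ)

/-- directional derivative `∂_ω B(θ) = d/dt B(θ + tω)|₀`. -/
def dOm (ω : ℝ × ℝ) (B : ℝ × ℝ → M2R) (θ : ℝ × ℝ) : M2R :=
  Matrix.of fun i j => deriv (fun t : ℝ => B (θ.1 + t * ω.1, θ.2 + t * ω.2) i j) 0

/-- Fourier coefficient `F̂(k)` of a function on `𝕋²`. -/
def fhat2 (F : ℝ × ℝ → M2R) (k : ℤ × ℤ) : M2C :=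
  Matrix.of fun i j => ∫ θ in Set.Icc (0:ℝ) 1 ×ˢ Set.Icc (0:ℝ) 1,
    ((F θ i j : ℝ) : ℂ) * Complex.exp (-2*π*Complex.I*((k.1:ℝ)*θ.1 + (k.2:ℝ)*θ.2))

/-- weighted Fourier norm `|F|_h = Σ_k ‖F̂(k)‖ e^{2π|k|h}`, valued in `[0,∞]`. -/
def wnorm2 (h : ℝ) (F : ℝ × ℝ → M2R) : ℝ≥0∞ :=
  ∑' k : ℤ × ℤ, ENNReal.ofReal (opNormC (fhat2 F k) * Real.exp (2*π*(knorm k)*h))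

def Per2 (F : ℝ × ℝ → M2R) : Prop :=
  ∀ θ : ℝ × ℝ, F (θ.1 + 1, θ.2) = F θ ∧ F (θ.1, θ.2 + 1) = F θ

def PMPer2 (B : ℝ × ℝ → M2R) : Prop :=
  ∀ θ : ℝ × ℝ, (B (θ.1 + 1, θ.2) = B θ ∨ B (θ.1 + 1, θ.2) = -B θ) ∧
    (B (θ.1, θ.2 + 1) = B θ ∨ B (θ.1, θ.2 + 1) = -B θ)

def RealAnalytic2 (B : ℝ × ℝ → M2R) : Prop :=
  ∀ (i j : Fin 2) (θ : ℝ × ℝ), AnalyticAt ℝ (fun t => B t i j) θ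

def Cont2 (F : ℝ × ℝ → M2R) : Prop := ∀ i j, Continuous fun θ => F θ i j

def Strip2 (h : ℝ) : Set (ℂ × ℂ) := {z | |z.1.im| < h ∧ |z.2.im| < h}

def HoloStrip2 (h : ℝ) (F : ℂ × ℂ → M2C) : Prop :=
  ∀ i j, DifferentiableOn ℂ (fun z => F z i j) (Strip2 h)

def Per2C (F : ℂ × ℂ → M2C) : Prop :=
  ∀ z : ℂ × ℂ, F (z.1 + 1, z.2) = F z ∧ F (z.1, z.2 + 1) = F z

def StripBound2 (h : ℝ) (F : ℂ × ℂ → M2C) (b : ℝ) : Prop :=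
  ∀ z ∈ Strip2 h, opNormC (F z) ≤ b

def Extends2 (F : ℂ × ℂ → M2C) (G : ℝ × ℝ → M2R) : Prop :=
  ∀ θ : ℝ × ℝ, F ((θ.1 : ℂ), (θ.2 : ℂ)) = (G θ).map Complex.ofReal

/-- `‖B‖_{C¹} ≤ b` for a map on `ℝ²` (sup of `B` and its partial derivatives). -/
def C1R2 (B : ℝ × ℝ → M2R) (b : ℝ) : Prop :=
  ∀ θ : ℝ × ℝ, opNorm (B θ) ≤ b ∧
    opNorm (Matrix.of fun i j => deriv (fun t => B (θ.1 + t, θ.2) i j) 0) ≤ b ∧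
    opNorm (Matrix.of fun i j => deriv (fun t => B (θ.1, θ.2 + t) i j) 0) ≤ b

/-- `A = 2πϱJ` with `J = [[0,1],[-1,0]]`. -/
def rotGen (ϱ : ℝ) : M2R := !![0, 2*π*ϱ; -(2*π*ϱ), 0]

/-- `[[0,c],[0,0]]`. -/
def parabGen (c : ℝ) : M2R := !![0, c; 0, 0]

def parabGenC (c : ℝ) : M2C := (parabGen c).map Complex.ofReal

/-! ### Auxiliary material for Statement 19 -/

section Statement19Aux

open Real

abbrev E2 := EuclideanSpace ℝ (Fin 2)

lemma normsq_E2 (v : E2) : ‖v‖ ^ 2 = v 0 ^ 2 + v 1 ^ 2 := by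
  rw [EuclideanSpace.norm_eq]
  rw [Real.sq_sqrt (by positivity)]
  simp [Fin.sum_univ_two, sq_abs]

lemma norm_E2 (v : E2) : ‖v‖ = Real.sqrt (v 0 ^ 2 + v 1 ^ 2) := by
  rw [← normsq_E2, Real.sqrt_sq (norm_nonneg v)]

lemma le_of_sq_le_sq' {a b : ℝ} (ha : 0 ≤ a) (hb : 0 ≤ b) (h : a ^ 2 ≤ b ^ 2) : a ≤ b := by
  nlinarith

lemma abs_comp_le_norm (v : E2) (i : Fin 2) : |v i| ≤ ‖v‖ := by
  apply le_of_sq_le_sq' (abs_nonneg _) (norm_nonneg _)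
  rw [normsq_E2, sq_abs]
  fin_cases i <;> simp <;> nlinarith [sq_nonneg (v 0), sq_nonneg (v 1)]

/-- the cross product (determinant) of two plane vectors -/
def crossP (v w : E2) : ℝ := v 0 * w 1 - v 1 * w 0

lemma abs_crossP_le (v w : E2) : |crossP v w| ≤ ‖v‖ * ‖w‖ := by
  apply le_of_sq_le_sq' (abs_nonneg _) (by positivity)
  rw [sq_abs, mul_pow, normsq_E2, normsq_E2, crossP]
  nlinarith [sq_nonneg (v 0 * w 0 + v 1 * w 1)]

lemma toEuc_apply (M : M2R) (v : E2) (i : Fin 2) :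
    Matrix.toEuclideanLin M v i = M i 0 * v 0 + M i 1 * v 1 := by
  rw [Matrix.toEuclideanLin_apply]
  simp [Matrix.mulVec, dotProduct, Fin.sum_univ_two]

lemma crossP_toEuc (M : M2R) (v w : E2) :
    crossP (Matrix.toEuclideanLin M v) (Matrix.toEuclideanLin M w)
      = M.det * crossP v w := by
  simp only [crossP, toEuc_apply, Matrix.det_fin_two]
  ring

lemma crossP_add_right (x e : E2) : crossP x (x + e) = crossP x e := by
  simp only [crossP, PiLp.add_apply]
  ring

lemma opNorm_def (M : M2R) :
    opNorm M = ‖LinearMap.toContinuousLinearMap (Matrix.toEuclideanLin M)‖ := rfl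

lemma opNorm_nonneg' (M : M2R) : 0 ≤ opNorm M := norm_nonneg _

lemma toEuc_le (M : M2R) (v : E2) :
    ‖Matrix.toEuclideanLin M v‖ ≤ opNorm M * ‖v‖ := by
  have h := (LinearMap.toContinuousLinearMap (Matrix.toEuclideanLin M)).le_opNorm v
  rwa [LinearMap.coe_toContinuousLinearMap'] at h

lemma opNorm_le_bound' {M : M2R} {c : ℝ} (hc : 0 ≤ c)
    (h : ∀ v : E2, ‖Matrix.toEuclideanLin M v‖ ≤ c * ‖v‖) : opNorm M ≤ c := by
  rw [opNorm_def]
  exact ContinuousLinearMap.opNorm_le_bound _ hc fun v => by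
    rw [LinearMap.coe_toContinuousLinearMap']; exact h v

lemma toEuc_mul (M N : M2R) (v : E2) :
    Matrix.toEuclideanLin (M * N) v
      = Matrix.toEuclideanLin M (Matrix.toEuclideanLin N v) := by
  simp [Matrix.toEuclideanLin_apply, Matrix.mulVec_mulVec]

lemma toEuc_one (v : E2) : Matrix.toEuclideanLin (1 : M2R) v = v := by
  simp [Matrix.toEuclideanLin_apply, Matrix.one_mulVec]

lemma opNorm_mul_le' (M N : M2R) : opNorm (M * N) ≤ opNorm M * opNorm N := by
  apply opNorm_le_bound' (mul_nonneg (opNorm_nonneg' M) (opNorm_nonneg' N))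
  intro v
  rw [toEuc_mul]
  calc ‖Matrix.toEuclideanLin M (Matrix.toEuclideanLin N v)‖
      ≤ opNorm M * ‖Matrix.toEuclideanLin N v‖ := toEuc_le _ _
    _ ≤ opNorm M * (opNorm N * ‖v‖) :=
        mul_le_mul_of_nonneg_left (toEuc_le _ _) (opNorm_nonneg' M)
    _ = opNorm M * opNorm N * ‖v‖ := by ring

lemma opNorm_one_le : opNorm (1 : M2R) ≤ 1 :=
  opNorm_le_bound' zero_le_one fun v => by rw [toEuc_one, one_mul]

/-- the matrix picture of `opNorm` as a linear map, for summation purposes -/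
def opL : M2R →ₗ[ℝ] (E2 →L[ℝ] E2) :=
  (LinearMap.toContinuousLinearMap :
      (E2 →ₗ[ℝ] E2) ≃ₗ[ℝ] (E2 →L[ℝ] E2)).toLinearMap.comp
    (Matrix.toEuclideanLin : M2R ≃ₗ[ℝ] (E2 →ₗ[ℝ] E2)).toLinearMap

lemma opNorm_eq_opL (M : M2R) : opNorm M = ‖opL M‖ := rfl

lemma opNorm_add_le' (M N : M2R) : opNorm (M + N) ≤ opNorm M + opNorm N := by
  simp only [opNorm_eq_opL, map_add]; exact norm_add_le _ _

lemma opNorm_sum_le' {s : Finset ℕ} (f : ℕ → M2R) :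
    opNorm (∑ i ∈ s, f i) ≤ ∑ i ∈ s, opNorm (f i) := by
  simp only [opNorm_eq_opL, map_sum]
  exact norm_sum_le _ _

lemma inner_E2 (x y : E2) : (inner ℝ x y : ℝ) = x 0 * y 0 + x 1 * y 1 := by
  simp [PiLp.inner_apply, Fin.sum_univ_two, mul_comm]

lemma opNorm_transpose_le (M : M2R) : opNorm Mᵀ ≤ opNorm M := by
  apply opNorm_le_bound' (opNorm_nonneg' M)
  intro v
  set u := Matrix.toEuclideanLin Mᵀ v with hu
  have h1 : ‖u‖ ^ 2 = (inner ℝ u u : ℝ) := (real_inner_self_eq_norm_sq u).symm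
  have h2 : (inner ℝ u u : ℝ) = (inner ℝ v (Matrix.toEuclideanLin M u) : ℝ) := by
    rw [inner_E2, inner_E2]
    simp only [hu, toEuc_apply, Matrix.transpose_apply]
    ring
  have h3 : (inner ℝ v (Matrix.toEuclideanLin M u) : ℝ)
      ≤ ‖v‖ * ‖Matrix.toEuclideanLin M u‖ := real_inner_le_norm _ _
  have h4 : ‖Matrix.toEuclideanLin M u‖ ≤ opNorm M * ‖u‖ := toEuc_le _ _
  rcases le_or_gt ‖u‖ 0 with h0 | h0
  · have : ‖u‖ = 0 := le_antisymm h0 (norm_nonneg _)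
    rw [this]; exact mul_nonneg (opNorm_nonneg' M) (norm_nonneg v)
  · nlinarith [norm_nonneg v, opNorm_nonneg' M]

/-- `J = [[0,-1],[1,0]]`. -/
def Jm : M2R := !![0, -1; 1, 0]

lemma Jm_isom (v : E2) : ‖Matrix.toEuclideanLin Jm v‖ = ‖v‖ := by
  rw [norm_E2, norm_E2]
  simp only [toEuc_apply, Jm]
  norm_num [Matrix.cons_val_zero, Matrix.cons_val_one, Matrix.head_cons]
  ring_nf

lemma Jmt_isom (v : E2) : ‖Matrix.toEuclideanLin Jmᵀ v‖ = ‖v‖ := by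
  rw [norm_E2, norm_E2]
  simp only [toEuc_apply, Jm, Matrix.transpose_apply]
  norm_num [Matrix.cons_val_zero, Matrix.cons_val_one, Matrix.head_cons]
  ring_nf

lemma opNorm_Jm_le : opNorm Jm ≤ 1 :=
  opNorm_le_bound' zero_le_one fun v => by rw [Jm_isom, one_mul]

lemma opNorm_Jmt_le : opNorm Jmᵀ ≤ 1 :=
  opNorm_le_bound' zero_le_one fun v => by rw [Jmt_isom, one_mul]

lemma adj_eq_J (M : M2R) : M.adjugate = Jm * (Mᵀ * Jmᵀ) := by
  have hJt : Jmᵀ = !![0, 1; -1, 0] := by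
    ext i j
    fin_cases i <;> fin_cases j <;> simp [Jm]
  rw [Matrix.adjugate_fin_two, hJt]
  ext i j
  fin_cases i <;> fin_cases j <;>
    simp [Jm, Matrix.mul_apply, Fin.sum_univ_two] <;> ring

lemma opNorm_adjugate_le (M : M2R) : opNorm M.adjugate ≤ opNorm M := by
  rw [adj_eq_J]
  calc opNorm (Jm * (Mᵀ * Jmᵀ)) ≤ opNorm Jm * opNorm (Mᵀ * Jmᵀ) := opNorm_mul_le' _ _
    _ ≤ 1 * (opNorm Mᵀ * opNorm Jmᵀ) := by
        apply mul_le_mul opNorm_Jm_le (opNorm_mul_le' _ _) (opNorm_nonneg' _) zero_le_one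
    _ ≤ 1 * (opNorm M * 1) := by
        apply mul_le_mul_of_nonneg_left _ zero_le_one
        exact mul_le_mul (opNorm_transpose_le M) opNorm_Jmt_le (opNorm_nonneg' _)
          (opNorm_nonneg' _)
    _ = opNorm M := by ring

lemma adj_cancel {M : M2R} (h : M.det = 1) (v : E2) :
    Matrix.toEuclideanLin M.adjugate (Matrix.toEuclideanLin M v) = v := by
  rw [← toEuc_mul, Matrix.adjugate_mul, h, one_smul, toEuc_one]

lemma norm_le_opNorm_mul {M : M2R} (h : M.det = 1) (v : E2) :
    ‖v‖ ≤ opNorm M * ‖Matrix.toEuclideanLin M v‖ := by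
  calc ‖v‖ = ‖Matrix.toEuclideanLin M.adjugate (Matrix.toEuclideanLin M v)‖ := by
        rw [adj_cancel h]
    _ ≤ opNorm M.adjugate * ‖Matrix.toEuclideanLin M v‖ := toEuc_le _ _
    _ ≤ opNorm M * ‖Matrix.toEuclideanLin M v‖ :=
        mul_le_mul_of_nonneg_right (opNorm_adjugate_le M) (norm_nonneg _)

lemma toEuc_ne_zero {M : M2R} (h : M.det = 1) {v : E2} (hv : v ≠ 0) :
    Matrix.toEuclideanLin M v ≠ 0 := by
  intro h0
  apply hv
  have := norm_le_opNorm_mul h v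
  rw [h0, norm_zero, mul_zero] at this
  exact norm_le_zero_iff.mp this

lemma one_le_opNorm_det1 {M : M2R} (h : M.det = 1) : 1 ≤ opNorm M := by
  set e : E2 := (WithLp.equiv 2 (Fin 2 → ℝ)).symm ![1, 0] with he
  have h0 : e 0 = 1 := by rw [he]; rfl
  have h1 : e 1 = 0 := by rw [he]; rfl
  have hne : ‖e‖ = 1 := by rw [norm_E2, h0, h1]; norm_num
  have ha := norm_le_opNorm_mul h e
  have hb := toEuc_le M e
  rw [hne] at ha hb
  nlinarith [opNorm_nonneg' M, norm_nonneg (Matrix.toEuclideanLin M e)]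

lemma abs_entry_le_opNorm (M : M2R) (i j : Fin 2) : |M i j| ≤ opNorm M := by
  set e : E2 := (WithLp.equiv 2 (Fin 2 → ℝ)).symm (fun k => if k = j then 1 else 0) with he
  have hcomp : ∀ k, e k = if k = j then 1 else 0 := fun k => by
    rw [he]; rfl
  have hne : ‖e‖ = 1 := by
    rw [norm_E2, hcomp, hcomp]
    fin_cases j <;> norm_num
  have happ : Matrix.toEuclideanLin M e i = M i j := by
    rw [toEuc_apply, hcomp, hcomp]
    fin_cases j <;> norm_num
  calc |M i j| = |Matrix.toEuclideanLin M e i| := by rw [happ]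
    _ ≤ ‖Matrix.toEuclideanLin M e‖ := abs_comp_le_norm _ _
    _ ≤ opNorm M * ‖e‖ := toEuc_le _ _
    _ = opNorm M := by rw [hne, mul_one]

end Statement19Aux

section Statement19Aux2

open Real

lemma det_rotM (ϱ : ℝ) : (rotM ϱ).det = 1 := by
  rw [rotM, Matrix.det_fin_two_of]
  have := Real.sin_sq_add_cos_sq (2*π*ϱ)
  nlinarith

lemma det_parabM (c : ℝ) : (parabM c).det = 1 := by
  rw [parabM, Matrix.det_fin_two_of]; ring

lemma rotM_entries (ϱ : ℝ) : rotM ϱ 0 0 = Real.cos (2*π*ϱ) ∧ rotM ϱ 0 1 = -Real.sin (2*π*ϱ)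
    ∧ rotM ϱ 1 0 = Real.sin (2*π*ϱ) ∧ rotM ϱ 1 1 = Real.cos (2*π*ϱ) := by
  refine ⟨?_, ?_, ?_, ?_⟩ <;> simp [rotM]

lemma rot_isom (ϱ : ℝ) (v : E2) : ‖Matrix.toEuclideanLin (rotM ϱ) v‖ = ‖v‖ := by
  obtain ⟨e00, e01, e10, e11⟩ := rotM_entries ϱ
  rw [norm_E2, norm_E2]
  simp only [toEuc_apply, e00, e01, e10, e11]
  have := Real.sin_sq_add_cos_sq (2*π*ϱ)
  congr 1
  nlinarith [sq_nonneg (v 0), sq_nonneg (v 1)]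

lemma opNorm_rot_le (ϱ : ℝ) : opNorm (rotM ϱ) ≤ 1 :=
  opNorm_le_bound' zero_le_one fun v => by rw [rot_isom, one_mul]

lemma opNorm_pow_le_one {M : M2R} (h : opNorm M ≤ 1) (k : ℕ) : opNorm (M ^ k) ≤ 1 := by
  induction k with
  | zero => rw [pow_zero]; exact opNorm_one_le
  | succ n ih =>
      rw [pow_succ]
      calc opNorm (M ^ n * M) ≤ opNorm (M ^ n) * opNorm M := opNorm_mul_le' _ _
        _ ≤ 1 * 1 := mul_le_mul ih h (opNorm_nonneg' _) zero_le_one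
        _ = 1 := by ring

lemma parabM_mul (b c : ℝ) : parabM b * parabM c = parabM (b + c) := by
  rw [parabM, parabM, parabM]
  ext i j
  fin_cases i <;> fin_cases j <;> simp [Matrix.mul_apply, Fin.sum_univ_two] <;> ring

lemma parabM_pow (c : ℝ) (k : ℕ) : parabM c ^ k = parabM (k * c) := by
  induction k with
  | zero =>
      rw [pow_zero]
      ext i j
      fin_cases i <;> fin_cases j <;> simp [parabM]
  | succ n ih =>
      rw [pow_succ, ih, parabM_mul]
      push_cast
      ring_nf

lemma parabM_entries (c : ℝ) : parabM c 0 0 = 1 ∧ parabM c 0 1 = c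
    ∧ parabM c 1 0 = 0 ∧ parabM c 1 1 = 1 := by
  refine ⟨?_, ?_, ?_, ?_⟩ <;> simp [parabM]

lemma opNorm_parab_le (c : ℝ) : opNorm (parabM c) ≤ 1 + |c| := by
  obtain ⟨e00, e01, e10, e11⟩ := parabM_entries c
  apply opNorm_le_bound' (by positivity)
  intro v
  apply le_of_sq_le_sq' (norm_nonneg _) (by positivity)
  rw [mul_pow, normsq_E2, normsq_E2]
  simp only [toEuc_apply, e00, e01, e10, e11]
  have h1 : 2 * (c * (v 0 * v 1)) ≤ |c| * (v 0 ^ 2 + v 1 ^ 2) := by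
    have : 2 * (c * (v 0 * v 1)) ≤ 2 * (|c| * (|v 0| * |v 1|)) := by
      calc 2 * (c * (v 0 * v 1)) ≤ 2 * |c * (v 0 * v 1)| := by
            nlinarith [le_abs_self (c * (v 0 * v 1))]
        _ = 2 * (|c| * (|v 0| * |v 1|)) := by rw [abs_mul, abs_mul]
    nlinarith [sq_nonneg (|v 0| - |v 1|), sq_abs (v 0), sq_abs (v 1), abs_nonneg c]
  nlinarith [abs_nonneg c, sq_nonneg (v 0 + c * v 1), sq_abs c, sq_nonneg (v 0), sq_nonneg (v 1),
    mul_nonneg (abs_nonneg c) (sq_nonneg (v 1))]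

/-! #### distances on `ℝP¹ = ℝ/(1/2)ℤ` -/

lemma rp1_coe_sub (s t : ℝ) : (s : RP1) - (t : RP1) = ((s - t : ℝ) : RP1) :=
  (QuotientAddGroup.mk_sub _ s t).symm

lemma rp1_dist_eq (s t : ℝ) :
    dist (s : RP1) (t : RP1) = |s - t - (round (2 * (s - t)) : ℤ) * (1/2 : ℝ)| := by
  rw [dist_eq_norm, rp1_coe_sub, AddCircle.norm_eq]
  norm_num

lemma rp1_dist_le_quarter (x y : RP1) : dist x y ≤ 1/4 := by
  rw [dist_eq_norm]
  calc ‖x - y‖ ≤ |(1/2 : ℝ)| / 2 := AddCircle.norm_le_half_period _ (by norm_num)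
    _ = 1/4 := by rw [abs_of_pos (by norm_num : (0:ℝ) < 1/2)]; norm_num

lemma rp1_coe_eq_iff {x y : ℝ} :
    (x : RP1) = (y : RP1) ↔ ∃ k : ℤ, x - y = k * (1/2 : ℝ) := by
  rw [QuotientAddGroup.eq_iff_sub_mem, AddSubgroup.mem_zmultiples_iff]
  constructor
  · rintro ⟨k, hk⟩; exact ⟨k, by rw [← hk, zsmul_eq_mul]⟩
  · rintro ⟨k, hk⟩; exact ⟨k, by rw [zsmul_eq_mul, ← hk]⟩

lemma rp1_sin_dist (s t : ℝ) :
    Real.sin (2 * π * dist (s : RP1) (t : RP1)) = |Real.sin (2 * π * (s - t))| := by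
  rw [rp1_dist_eq]
  set k : ℤ := round (2 * (s - t)) with hk
  set x : ℝ := s - t - (k : ℝ) * (1/2 : ℝ) with hx
  have hx2 : x = (2 * (s - t) - (k : ℝ)) / 2 := by rw [hx]; ring
  have h2 : |2 * (s - t) - (k : ℝ)| ≤ 1/2 := by
    simpa [hk] using abs_sub_round (2 * (s - t))
  have hxle : |x| ≤ 1/4 := by
    rw [hx2, abs_div, abs_two]
    linarith
  have hpi4 : ∀ y : ℝ, y ≤ 1/4 → 2 * π * y ≤ π := by
    intro y hy
    have h := mul_le_mul_of_nonneg_left hy (by positivity : (0:ℝ) ≤ 2 * π)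
    nlinarith [Real.pi_pos]
  have h1 : Real.sin (2 * π * |x|) = |Real.sin (2 * π * x)| := by
    rcases le_or_gt 0 x with hx0 | hx0
    · rw [abs_of_nonneg hx0, abs_of_nonneg]
      exact Real.sin_nonneg_of_nonneg_of_le_pi (by positivity)
        (hpi4 x (le_trans (le_abs_self x) hxle))
    · have hxa : |x| = -x := abs_of_neg hx0
      have hsin : Real.sin (2 * π * x) ≤ 0 := by
        have h4 : 0 ≤ Real.sin (2 * π * -x) := by
          apply Real.sin_nonneg_of_nonneg_of_le_pi
          · have : (0:ℝ) ≤ -x := by linarith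
            positivity
          · exact hpi4 (-x) (le_trans (neg_le_abs x) hxle)
        rw [show 2 * π * -x = -(2 * π * x) by ring, Real.sin_neg] at h4
        linarith
      rw [hxa, show 2 * π * -x = -(2 * π * x) by ring, Real.sin_neg, abs_of_nonpos hsin]
  rw [h1]
  have h5 : 2 * π * x = 2 * π * (s - t) + (-k : ℤ) * π := by
    push_cast
    rw [hx]
    ring
  rw [h5, Real.sin_add_int_mul_pi, abs_mul]
  have habs1 : |((-1:ℝ)) ^ (-k)| = 1 := by
    rcases Int.even_or_odd (-k) with he | ho
    · rw [he.neg_one_zpow]; norm_num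
    · rw [ho.neg_one_zpow]; norm_num
  rw [habs1, one_mul]

end Statement19Aux2

section Statement19Aux3

open Real Complex

/-- the complex number attached to a plane vector -/
def cOf (v : E2) : ℂ := (v 0 : ℂ) + (v 1 : ℂ) * Complex.I

lemma cOf_ne_zero {v : E2} (hv : v ≠ 0) : cOf v ≠ 0 := by
  intro h
  apply hv
  have hre : v 0 = 0 := by
    have := congrArg Complex.re h
    simpa [cOf] using this
  have him : v 1 = 0 := by
    have := congrArg Complex.im h
    simpa [cOf] using this
  ext i
  fin_cases i <;> simpa [hre, him]

lemma abs_cOf (v : E2) : ‖cOf v‖ = ‖v‖ := by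
  rw [cOf, norm_E2, Complex.norm_def, Complex.normSq_add_mul_I]

lemma lineClass_eq (v : E2) : lineClass v = ((Complex.arg (cOf v) / (2*π) : ℝ) : RP1) := rfl

lemma cos_arg_cOf {v : E2} (hv : v ≠ 0) : Real.cos (Complex.arg (cOf v)) = v 0 / ‖v‖ := by
  rw [Complex.cos_arg (cOf_ne_zero hv), abs_cOf]
  simp [cOf]

lemma sin_arg_cOf (v : E2) : Real.sin (Complex.arg (cOf v)) = v 1 / ‖v‖ := by
  rw [Complex.sin_arg, abs_cOf]
  simp [cOf]

lemma sin_dist_lineClass {v w : E2} (hv : v ≠ 0) (hw : w ≠ 0) :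
    Real.sin (2*π*dist (lineClass v) (lineClass w)) * (‖v‖ * ‖w‖) = |crossP v w| := by
  have hπ : (2*π) ≠ 0 := by positivity
  have hvn : ‖v‖ ≠ 0 := norm_ne_zero_iff.mpr hv
  have hwn : ‖w‖ ≠ 0 := norm_ne_zero_iff.mpr hw
  set a := Complex.arg (cOf v) with ha
  set b := Complex.arg (cOf w) with hb
  rw [lineClass_eq, lineClass_eq, rp1_sin_dist]
  have h1 : 2*π*(a/(2*π) - b/(2*π)) = a - b := by field_simp
  rw [h1, Real.sin_sub, sin_arg_cOf, cos_arg_cOf hw, cos_arg_cOf hv, sin_arg_cOf]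
  have h2 : v 1 / ‖v‖ * (w 0 / ‖w‖) - v 0 / ‖v‖ * (w 1 / ‖w‖)
      = -crossP v w / (‖v‖ * ‖w‖) := by
    rw [crossP]; field_simp; ring
  rw [h2, abs_div, abs_neg, _root_.abs_of_nonneg (mul_nonneg (norm_nonneg v) (norm_nonneg w)),
    div_mul_cancel₀]
  exact mul_ne_zero hvn hwn

lemma dist_lineClass_le {v w : E2} (hv : v ≠ 0) (hw : w ≠ 0) :
    dist (lineClass v) (lineClass w) * (4 * (‖v‖ * ‖w‖)) ≤ |crossP v w| := by
  have hd0 : 0 ≤ dist (lineClass v) (lineClass w) := dist_nonneg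
  have hdq : dist (lineClass v) (lineClass w) ≤ 1/4 := rp1_dist_le_quarter _ _
  have hsin := Real.mul_le_sin (x := 2*π*dist (lineClass v) (lineClass w))
    (by positivity) (by nlinarith [Real.pi_pos])
  have h4 : 4 * dist (lineClass v) (lineClass w)
      = 2/π * (2*π*dist (lineClass v) (lineClass w)) := by
    field_simp
    ring
  rw [← sin_dist_lineClass hv hw]
  have := mul_le_mul_of_nonneg_right (h4 ▸ hsin)
      (mul_nonneg (norm_nonneg v) (norm_nonneg w))
  calc dist (lineClass v) (lineClass w) * (4 * (‖v‖ * ‖w‖))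
      = (4 * dist (lineClass v) (lineClass w)) * (‖v‖ * ‖w‖) := by ring
    _ ≤ Real.sin (2*π*dist (lineClass v) (lineClass w)) * (‖v‖ * ‖w‖) := this

lemma crossP_le_dist {v w : E2} (hv : v ≠ 0) (hw : w ≠ 0) :
    |crossP v w| ≤ 2*π*dist (lineClass v) (lineClass w) * (‖v‖ * ‖w‖) := by
  rw [← sin_dist_lineClass hv hw]
  apply mul_le_mul_of_nonneg_right _ (mul_nonneg (norm_nonneg v) (norm_nonneg w))
  exact Real.sin_le (by positivity)

lemma dirVec_apply (t : ℝ) :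
    dirVec t 0 = Real.cos (2*π*t) ∧ dirVec t 1 = Real.sin (2*π*t) := by
  constructor <;> rw [dirVec] <;> simp

lemma norm_dirVec (t : ℝ) : ‖dirVec t‖ = 1 := by
  obtain ⟨h0, h1⟩ := dirVec_apply t
  rw [norm_E2, h0, h1]
  rw [show Real.cos (2*π*t)^2 + Real.sin (2*π*t)^2 = 1 by
    have := Real.sin_sq_add_cos_sq (2*π*t); linarith]
  exact Real.sqrt_one

lemma dirVec_ne_zero (t : ℝ) : dirVec t ≠ 0 := by
  intro h
  have := norm_dirVec t
  rw [h, norm_zero] at this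
  norm_num at this

lemma coe_repHalf (φ : RP1) : ((repHalf φ : ℝ) : RP1) = φ :=
  (AddCircle.equivIco (1/2) 0).symm_apply_apply φ

lemma lineClass_dirVec (t : ℝ) : lineClass (dirVec t) = (t : RP1) := by
  obtain ⟨h0, h1⟩ := dirVec_apply t
  rw [lineClass_eq]
  have hc : cOf (dirVec t)
      = Complex.cos ((2*π*t : ℝ) : ℂ) + Complex.sin ((2*π*t : ℝ) : ℂ) * Complex.I := by
    rw [cOf, h0, h1]
    simp [Complex.ofReal_cos, Complex.ofReal_sin]
  apply rp1_coe_eq_iff.mpr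
  have harg := Complex.arg_cos_add_sin_mul_I_sub (2*π*t)
  rw [← hc] at harg
  set n : ℤ := ⌊(π - 2*π*t) / (2 * π)⌋ with hn
  refine ⟨2 * n, ?_⟩
  have h2 : Complex.arg (cOf (dirVec t)) = 2*π*t + 2*π*n := by linarith
  rw [h2]
  have hπ : π ≠ 0 := Real.pi_ne_zero
  push_cast
  field_simp
  try ring

end Statement19Aux3

section Statement19Aux4

open Real Complex

lemma cOf_smul (c : ℝ) (v : E2) : cOf (c • v) = (c : ℂ) * cOf v := by
  rw [cOf, cOf, PiLp.smul_apply, PiLp.smul_apply, smul_eq_mul, smul_eq_mul]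
  push_cast
  ring

lemma lineClass_smul {c : ℝ} (hc : c ≠ 0) {v : E2} (hv : v ≠ 0) :
    lineClass (c • v) = lineClass v := by
  rcases lt_or_gt_of_ne hc with hneg | hpos
  · -- c < 0
    have hz : cOf v ≠ 0 := cOf_ne_zero hv
    have h1 : cOf (c • v) = -(((-c : ℝ) : ℂ) * cOf v) := by
      rw [cOf_smul]; push_cast; ring
    have h2 : Complex.arg (((-c : ℝ) : ℂ) * cOf v) = Complex.arg (cOf v) :=
      Complex.arg_real_mul _ (by linarith)
    have hzz : ((-c : ℝ) : ℂ) * cOf v ≠ 0 := by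
      apply mul_ne_zero _ hz
      simpa using (by linarith : -c ≠ 0)
    have h3 : ((Complex.arg (-(((-c : ℝ) : ℂ) * cOf v)) : ℝ) : Real.Angle)
        = ((Complex.arg (((-c : ℝ) : ℂ) * cOf v) + π : ℝ) : Real.Angle) := by
      rw [Real.Angle.coe_add]
      exact_mod_cast Complex.arg_neg_coe_angle hzz
    rw [Real.Angle.angle_eq_iff_two_pi_dvd_sub] at h3
    obtain ⟨k, hk⟩ := h3
    rw [lineClass_eq, lineClass_eq, h1]
    apply rp1_coe_eq_iff.mpr
    refine ⟨2 * k + 1, ?_⟩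
    have hπ : π ≠ 0 := Real.pi_ne_zero
    have : Complex.arg (-(((-c : ℝ) : ℂ) * cOf v))
        = Complex.arg (cOf v) + π + 2 * π * k := by
      rw [h2] at hk
      linarith
    rw [this]
    push_cast
    field_simp
    ring
  · rw [lineClass_eq, lineClass_eq, cOf_smul, Complex.arg_real_mul _ hpos]

lemma dirVec_lineClass {u : E2} (hu : u ≠ 0) :
    ∃ c : ℝ, c ≠ 0 ∧ dirVec (repHalf (lineClass u)) = c • u := by
  have hz : cOf u ≠ 0 := cOf_ne_zero hu
  have hn : ‖u‖ ≠ 0 := norm_ne_zero_iff.mpr hu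
  have hcoe : ((repHalf (lineClass u) : ℝ) : RP1)
      = ((Complex.arg (cOf u) / (2*π) : ℝ) : RP1) := by
    rw [coe_repHalf]; exact lineClass_eq u
  obtain ⟨k, hk⟩ := rp1_coe_eq_iff.mp hcoe
  have hπ : π ≠ 0 := Real.pi_ne_zero
  have hrep : 2*π*repHalf (lineClass u) = Complex.arg (cOf u) + k * π := by
    have h2 : repHalf (lineClass u) = Complex.arg (cOf u) / (2*π) + k * (1/2) := by
      linarith
    rw [h2]
    field_simp
  refine ⟨(-1 : ℝ) ^ k / ‖u‖, ?_, ?_⟩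
  · apply div_ne_zero _ hn
    exact zpow_ne_zero k (by norm_num)
  · obtain ⟨h0, h1⟩ := dirVec_apply (repHalf (lineClass u))
    ext i
    fin_cases i
    · show dirVec (repHalf (lineClass u)) (0 : Fin 2)
        = ((((-1 : ℝ) ^ k / ‖u‖)) • u) (0 : Fin 2)
      rw [h0, PiLp.smul_apply, hrep, Real.cos_add_int_mul_pi, cos_arg_cOf hu, smul_eq_mul]
      field_simp
    · show dirVec (repHalf (lineClass u)) (1 : Fin 2)
        = ((((-1 : ℝ) ^ k / ‖u‖)) • u) (1 : Fin 2)
      rw [h1, PiLp.smul_apply, hrep, Real.sin_add_int_mul_pi, sin_arg_cOf, smul_eq_mul]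
      field_simp

lemma lineClass_dirVec_repHalf (φ : RP1) : lineClass (dirVec (repHalf φ)) = φ := by
  rw [lineClass_dirVec, coe_repHalf]

lemma projAct_def' (M : M2R) (φ : RP1) :
    projAct M φ = lineClass (Matrix.toEuclideanLin M (dirVec (repHalf φ))) := rfl

lemma projAct_one (φ : RP1) : projAct 1 φ = φ := by
  rw [projAct_def', toEuc_one, lineClass_dirVec_repHalf]

lemma projAct_mul {M N : M2R} (hM : M.det = 1) (hN : N.det = 1) (φ : RP1) :
    projAct (M * N) φ = projAct M (projAct N φ) := by
  set v := dirVec (repHalf φ) with hv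
  have hvne : v ≠ 0 := dirVec_ne_zero _
  have hNv : Matrix.toEuclideanLin N v ≠ 0 := toEuc_ne_zero hN hvne
  obtain ⟨c, hc, hdir⟩ := dirVec_lineClass hNv
  have hMNv : Matrix.toEuclideanLin M (Matrix.toEuclideanLin N v) ≠ 0 :=
    toEuc_ne_zero hM hNv
  calc projAct (M * N) φ = lineClass (Matrix.toEuclideanLin (M * N) v) := rfl
    _ = lineClass (Matrix.toEuclideanLin M (Matrix.toEuclideanLin N v)) := by rw [toEuc_mul]
    _ = lineClass (c • Matrix.toEuclideanLin M (Matrix.toEuclideanLin N v)) :=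
        (lineClass_smul hc hMNv).symm
    _ = lineClass (Matrix.toEuclideanLin M (c • Matrix.toEuclideanLin N v)) := by
        rw [LinearMap.map_smul]
    _ = lineClass (Matrix.toEuclideanLin M (dirVec (repHalf (lineClass
          (Matrix.toEuclideanLin N v))))) := by rw [hdir]
    _ = projAct M (projAct N φ) := rfl

lemma projAct_lipschitz {M : M2R} (hM : M.det = 1) (φ ψ : RP1) :
    dist (projAct M φ) (projAct M ψ) ≤ π/2 * opNorm M ^ 2 * dist φ ψ := by
  set v := dirVec (repHalf φ) with hv
  set w := dirVec (repHalf ψ) with hw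
  have hvne : v ≠ 0 := dirVec_ne_zero _
  have hwne : w ≠ 0 := dirVec_ne_zero _
  have hv1 : ‖v‖ = 1 := norm_dirVec _
  have hw1 : ‖w‖ = 1 := norm_dirVec _
  have hMv : Matrix.toEuclideanLin M v ≠ 0 := toEuc_ne_zero hM hvne
  have hMw : Matrix.toEuclideanLin M w ≠ 0 := toEuc_ne_zero hM hwne
  have key := dist_lineClass_le hMv hMw
  have hcross : crossP (Matrix.toEuclideanLin M v) (Matrix.toEuclideanLin M w)
      = crossP v w := by rw [crossP_toEuc, hM, one_mul]
  have hup : |crossP v w| ≤ 2*π*dist φ ψ := by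
    have h := crossP_le_dist hvne hwne
    rw [hv1, hw1, mul_one,
      show lineClass v = φ from lineClass_dirVec_repHalf φ,
      show lineClass w = ψ from lineClass_dirVec_repHalf ψ] at h
    simpa using h
  have h2a : 1 ≤ opNorm M * ‖Matrix.toEuclideanLin M v‖ := by
    have := norm_le_opNorm_mul hM v; rwa [hv1] at this
  have h2b : 1 ≤ opNorm M * ‖Matrix.toEuclideanLin M w‖ := by
    have := norm_le_opNorm_mul hM w; rwa [hw1] at this
  have hab : 1 ≤ (opNorm M * ‖Matrix.toEuclideanLin M v‖)
      * (opNorm M * ‖Matrix.toEuclideanLin M w‖) := by nlinarith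
  have hd0 : (0:ℝ) ≤ dist (projAct M φ) (projAct M ψ) := dist_nonneg
  have keyd : dist (projAct M φ) (projAct M ψ)
      * (4 * (‖Matrix.toEuclideanLin M v‖ * ‖Matrix.toEuclideanLin M w‖))
      ≤ 2*π*dist φ ψ := by
    calc dist (projAct M φ) (projAct M ψ)
        * (4 * (‖Matrix.toEuclideanLin M v‖ * ‖Matrix.toEuclideanLin M w‖))
        ≤ |crossP (Matrix.toEuclideanLin M v) (Matrix.toEuclideanLin M w)| := key
      _ = |crossP v w| := by rw [hcross]
      _ ≤ 2*π*dist φ ψ := hup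
  calc dist (projAct M φ) (projAct M ψ)
      ≤ dist (projAct M φ) (projAct M ψ)
        * ((opNorm M * ‖Matrix.toEuclideanLin M v‖)
          * (opNorm M * ‖Matrix.toEuclideanLin M w‖)) := le_mul_of_one_le_right hd0 hab
    _ = opNorm M ^ 2 / 4 * (dist (projAct M φ) (projAct M ψ)
        * (4 * (‖Matrix.toEuclideanLin M v‖ * ‖Matrix.toEuclideanLin M w‖))) := by ring
    _ ≤ opNorm M ^ 2 / 4 * (2*π*dist φ ψ) := by
        apply mul_le_mul_of_nonneg_left keyd
        positivity
    _ = π/2 * opNorm M ^ 2 * dist φ ψ := by ring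

lemma projAct_step {M N : M2R} (hM : M.det = 1) (hN : N.det = 1) (φ : RP1) :
    dist (projAct M φ) (projAct N φ) ≤ opNorm N * opNorm (N - M) / 4 := by
  set v := dirVec (repHalf φ) with hv
  have hvne : v ≠ 0 := dirVec_ne_zero _
  have hv1 : ‖v‖ = 1 := norm_dirVec _
  have hMv : Matrix.toEuclideanLin M v ≠ 0 := toEuc_ne_zero hM hvne
  have hNv : Matrix.toEuclideanLin N v ≠ 0 := toEuc_ne_zero hN hvne
  have key := dist_lineClass_le hMv hNv
  have hsplit : Matrix.toEuclideanLin N v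
      = Matrix.toEuclideanLin M v + Matrix.toEuclideanLin (N - M) v := by
    have : N = M + (N - M) := by abel
    rw [show Matrix.toEuclideanLin N v
        = Matrix.toEuclideanLin (M + (N - M)) v by rw [← this]]
    rw [map_add]
    rfl
  have hcross : |crossP (Matrix.toEuclideanLin M v) (Matrix.toEuclideanLin N v)|
      ≤ ‖Matrix.toEuclideanLin M v‖ * opNorm (N - M) := by
    rw [hsplit, crossP_add_right]
    calc |crossP (Matrix.toEuclideanLin M v) (Matrix.toEuclideanLin (N - M) v)|
        ≤ ‖Matrix.toEuclideanLin M v‖ * ‖Matrix.toEuclideanLin (N - M) v‖ :=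
          abs_crossP_le _ _
      _ ≤ ‖Matrix.toEuclideanLin M v‖ * (opNorm (N - M) * ‖v‖) :=
          mul_le_mul_of_nonneg_left (toEuc_le _ _) (norm_nonneg _)
      _ = ‖Matrix.toEuclideanLin M v‖ * opNorm (N - M) := by rw [hv1, mul_one]
  have h2b : 1 ≤ opNorm N * ‖Matrix.toEuclideanLin N v‖ := by
    have := norm_le_opNorm_mul hN v; rwa [hv1] at this
  have hd0 : (0:ℝ) ≤ dist (projAct M φ) (projAct N φ) := dist_nonneg
  have hMvpos : 0 < ‖Matrix.toEuclideanLin M v‖ := norm_pos_iff.mpr hMv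
  calc dist (projAct M φ) (projAct N φ)
      ≤ dist (projAct M φ) (projAct N φ) * (opNorm N * ‖Matrix.toEuclideanLin N v‖) :=
        le_mul_of_one_le_right hd0 h2b
    _ = opNorm N / (4 * ‖Matrix.toEuclideanLin M v‖)
        * (dist (projAct M φ) (projAct N φ)
          * (4 * (‖Matrix.toEuclideanLin M v‖ * ‖Matrix.toEuclideanLin N v‖))) := by
        field_simp
    _ ≤ opNorm N / (4 * ‖Matrix.toEuclideanLin M v‖)
        * (‖Matrix.toEuclideanLin M v‖ * opNorm (N - M)) := by
        apply mul_le_mul_of_nonneg_left (key.trans hcross)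
        exact div_nonneg (opNorm_nonneg' N) (by positivity)
    _ = opNorm N * opNorm (N - M) / 4 := by
        field_simp

end Statement19Aux4

section Statement19Aux5

open Real

/-- ordered product `G (j-1) * ⋯ * G 0` -/
def Pseq (G : ℕ → M2R) : ℕ → M2R
  | 0 => 1
  | j + 1 => G j * Pseq G j

lemma Pseq_det {G : ℕ → M2R} (hG : ∀ j, (G j).det = 1) (j : ℕ) :
    (Pseq G j).det = 1 := by
  induction j with
  | zero => simp [Pseq]
  | succ n ih => rw [Pseq, Matrix.det_mul, hG n, ih, mul_one]

lemma Pseq_const (A : M2R) (j : ℕ) : Pseq (fun _ => A) j = A ^ j := by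
  induction j with
  | zero => simp [Pseq]
  | succ n ih => rw [Pseq, ih, ← pow_succ']

lemma Pseq_sub_pow (A : M2R) (G : ℕ → M2R) (j : ℕ) :
    Pseq G j = A ^ j + ∑ i ∈ Finset.range j, A ^ (j - 1 - i) * ((G i - A) * Pseq G i) := by
  induction j with
  | zero => simp [Pseq]
  | succ n ih =>
      have hterm : ∀ i ∈ Finset.range n,
          A * (A ^ (n - 1 - i) * ((G i - A) * Pseq G i))
            = A ^ (n + 1 - 1 - i) * ((G i - A) * Pseq G i) := by
        intro i hi
        have hin : i < n := Finset.mem_range.mp hi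
        have he : n + 1 - 1 - i = (n - 1 - i) + 1 := by omega
        rw [he, pow_succ', mul_assoc]
      calc Pseq G (n+1) = G n * Pseq G n := rfl
        _ = A * Pseq G n + (G n - A) * Pseq G n := by rw [sub_mul]; abel
        _ = A * (A ^ n + ∑ i ∈ Finset.range n, A ^ (n - 1 - i) * ((G i - A) * Pseq G i))
            + (G n - A) * Pseq G n := by rw [← ih]
        _ = A ^ (n+1) + (∑ i ∈ Finset.range n, A ^ (n + 1 - 1 - i) * ((G i - A) * Pseq G i)
            + A ^ (n + 1 - 1 - n) * ((G n - A) * Pseq G n)) := by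
            rw [mul_add, Finset.mul_sum, ← pow_succ', Finset.sum_congr rfl hterm]
            have h0 : n + 1 - 1 - n = 0 := by omega
            rw [h0, pow_zero, one_mul]
            abel
        _ = A ^ (n+1) + ∑ i ∈ Finset.range (n+1),
              A ^ (n + 1 - 1 - i) * ((G i - A) * Pseq G i) := by
            rw [Finset.sum_range_succ]

lemma Pseq_norm_le (A : M2R) (G : ℕ → M2R) (amax f : ℝ) (m : ℕ)
    (hA : ∀ k, k ≤ m → opNorm (A ^ k) ≤ amax)
    (hG : ∀ i, opNorm (G i - A) ≤ amax * f)
    (hf : 0 ≤ f) (ham : 1 ≤ amax)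
    (hsmall : 2 * amax ^ 2 * f * m ≤ 1) :
    ∀ j, j ≤ m → opNorm (Pseq G j) ≤ 2 * amax := by
  intro j
  induction j using Nat.strong_induction_on with
  | _ j ih =>
    intro hjm
    have ham0 : 0 ≤ amax := le_trans zero_le_one ham
    have hsum : opNorm (∑ i ∈ Finset.range j,
        A ^ (j - 1 - i) * ((G i - A) * Pseq G i)) ≤ amax := by
      calc opNorm (∑ i ∈ Finset.range j, A ^ (j - 1 - i) * ((G i - A) * Pseq G i))
          ≤ ∑ i ∈ Finset.range j, opNorm (A ^ (j - 1 - i) * ((G i - A) * Pseq G i)) :=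
            opNorm_sum_le' _
        _ ≤ ∑ i ∈ Finset.range j, amax * (amax * f * (2 * amax)) := by
            apply Finset.sum_le_sum
            intro i hi
            have hin : i < j := Finset.mem_range.mp hi
            have h1 : opNorm (A ^ (j - 1 - i)) ≤ amax := hA _ (by omega)
            have h2 : opNorm (G i - A) ≤ amax * f := hG i
            have h3 : opNorm (Pseq G i) ≤ 2 * amax := ih i hin (by omega)
            calc opNorm (A ^ (j - 1 - i) * ((G i - A) * Pseq G i))
                ≤ opNorm (A ^ (j - 1 - i)) * opNorm ((G i - A) * Pseq G i) :=
                  opNorm_mul_le' _ _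
              _ ≤ opNorm (A ^ (j - 1 - i)) * (opNorm (G i - A) * opNorm (Pseq G i)) :=
                  mul_le_mul_of_nonneg_left (opNorm_mul_le' _ _) (opNorm_nonneg' _)
              _ ≤ amax * (amax * f * (2 * amax)) := by
                  apply mul_le_mul h1 _ _ ham0
                  · exact mul_le_mul h2 h3 (opNorm_nonneg' _)
                      (mul_nonneg ham0 hf)
                  · exact mul_nonneg (opNorm_nonneg' _) (opNorm_nonneg' _)
        _ = j * (2 * amax ^ 2 * f * amax) := by
            rw [Finset.sum_const, Finset.card_range, nsmul_eq_mul]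
            ring
        _ ≤ m * (2 * amax ^ 2 * f * amax) := by
            apply mul_le_mul_of_nonneg_right _ (by positivity)
            exact_mod_cast Nat.cast_le.mpr hjm
        _ = (2 * amax ^ 2 * f * m) * amax := by ring
        _ ≤ 1 * amax := mul_le_mul_of_nonneg_right hsmall ham0
        _ = amax := one_mul _
    calc opNorm (Pseq G j)
        = opNorm (A ^ j + ∑ i ∈ Finset.range j, A ^ (j - 1 - i) * ((G i - A) * Pseq G i)) := by
          rw [← Pseq_sub_pow]
      _ ≤ opNorm (A ^ j) + opNorm (∑ i ∈ Finset.range j,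
            A ^ (j - 1 - i) * ((G i - A) * Pseq G i)) := opNorm_add_le' _ _
      _ ≤ amax + amax := add_le_add (hA j hjm) hsum
      _ = 2 * amax := by ring

lemma TprojT_iterate_fst (a : T1) (B : T1 → M2R) (p : T1 × RP1) (k : ℕ) :
    ((TprojT a B)^[k] p).1 = p.1 + k • a := by
  induction k with
  | zero => simp
  | succ n ih =>
      rw [Function.iterate_succ_apply']
      show ((TprojT a B)^[n] p).1 + a = _
      rw [ih, succ_nsmul, add_assoc]

lemma TprojT_iterate_snd (a : T1) (B : T1 → M2R) (hB : ∀ θ, (B θ).det = 1)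
    (p : T1 × RP1) (k : ℕ) :
    ((TprojT a B)^[k] p).2 = projAct (Pseq (fun j => B (p.1 + j • a)) k) p.2 := by
  induction k with
  | zero => simp [Pseq, projAct_one]
  | succ n ih =>
      rw [Function.iterate_succ_apply']
      show projAct (B (((TprojT a B)^[n] p).1)) (((TprojT a B)^[n] p).2) = _
      rw [TprojT_iterate_fst, ih, Pseq,
        projAct_mul (hB _) (Pseq_det (fun j => hB _) n)]

end Statement19Aux5

/-- Comparison of the iterated projective actions of a
constant (rotation or parabolic) cocycle `A` and its perturbation
`Ã = A(I + F)`: for `64 m³ ‖F‖_{C⁰} ≤ 1`,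
`d(T_{(α,A)}^m(θ,φ), T_{(α,Ã)}^m(θ,φ)) ≤ 16 C* m³ ‖A^m‖⁴ ‖F‖_{C⁰}`. -/
theorem projective_action_iterates_perturbation :
    ∃ Cs : ℝ, 1 ≤ Cs ∧
      ∀ (α : ℝ), Irrational α →
      ∀ Am : M2R, ((∃ ϱ : ℝ, Am = rotM ϱ) ∨ (∃ cst : ℝ, |cst| ≤ 1 ∧ Am = parabM cst)) →
      ∀ F : T1 → M2R, Continuous F → (∀ θ : T1, (1 + F θ).det = 1) →
      ∀ m : ℕ, 64 * (m:ℝ)^3 * normC0T F ≤ 1 →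
      ∀ p : T1 × RP1,
        dist ((TprojT ((α : ℝ) : T1) (fun _ => Am))^[m] p)
             ((TprojT ((α : ℝ) : T1) (fun θ => Am * (1 + F θ)))^[m] p)
          ≤ 16 * Cs * (m:ℝ)^3 * opNorm (Am ^ m) ^ 4 * normC0T F := by
  refine ⟨4, by norm_num, ?_⟩
  intro α _hα Am hA F hFc hFdet m hm p
  rcases Nat.eq_zero_or_pos m with rfl | hm1
  · simp
  have hm1R : (1:ℝ) ≤ (m:ℝ) := by exact_mod_cast hm1
  have hm0 : (0:ℝ) ≤ (m:ℝ) := by positivity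
  set f := normC0T F with hf
  have hopC : Continuous fun x : T1 => opNorm (F x) := by
    have hL : Continuous opL := opL.continuous_of_finiteDimensional
    have h1 : Continuous fun x : T1 => opL (F x) := hL.comp hFc
    have h2 : Continuous fun x : T1 => ‖opL (F x)‖ := h1.norm
    simpa [opNorm_eq_opL] using h2
  have hbdd : BddAbove (Set.range fun x : T1 => opNorm (F x)) := by
    rw [← Set.image_univ]
    exact (isCompact_univ.image hopC).bddAbove
  have hFb : ∀ θ : T1, opNorm (F θ) ≤ f := fun θ => le_ciSup hbdd θ
  have hf0 : 0 ≤ f := le_trans (opNorm_nonneg' (F 0)) (hFb 0)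
  have hdet : Am.det = 1 := by
    rcases hA with ⟨ϱ, rfl⟩ | ⟨c, _, rfl⟩
    exacts [det_rotM ϱ, det_parabM c]
  have hdetpow : ∀ k : ℕ, (Am ^ k).det = 1 := fun k => by
    rw [Matrix.det_pow, hdet, one_pow]
  set N := opNorm (Am ^ m) with hN
  have hN1 : 1 ≤ N := one_le_opNorm_det1 (hdetpow m)
  obtain ⟨amax, ham1, hamk, ham2m, ham2A⟩ :
      ∃ a : ℝ, 1 ≤ a ∧ (∀ k, k ≤ m → opNorm (Am ^ k) ≤ a) ∧ a ≤ 2 * (m:ℝ)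
        ∧ a ≤ 2 * N := by
    rcases hA with ⟨ϱ, rfl⟩ | ⟨c, hc, rfl⟩
    · exact ⟨1, le_refl 1, fun k _ => opNorm_pow_le_one (opNorm_rot_le ϱ) k,
        by linarith, by linarith⟩
    · refine ⟨1 + (m:ℝ) * |c|, by nlinarith [abs_nonneg c, hm0], ?_, ?_, ?_⟩
      · intro k hk
        have hkR : (k:ℝ) ≤ (m:ℝ) := by exact_mod_cast hk
        rw [parabM_pow]
        calc opNorm (parabM ((k:ℝ) * c)) ≤ 1 + |(k:ℝ) * c| := opNorm_parab_le _
          _ = 1 + (k:ℝ) * |c| := by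
              rw [abs_mul, Nat.abs_cast]
          _ ≤ 1 + (m:ℝ) * |c| := by
              have := mul_le_mul_of_nonneg_right hkR (abs_nonneg c)
              linarith
      · have h1 : (m:ℝ) * |c| ≤ (m:ℝ) * 1 := mul_le_mul_of_nonneg_left hc hm0
        linarith
      · have hent := abs_entry_le_opNorm (parabM c ^ m) 0 1
        rw [parabM_pow] at hent
        obtain ⟨_, e01, _, _⟩ := parabM_entries ((m:ℝ) * c)
        rw [e01, abs_mul, Nat.abs_cast] at hent
        rw [hN]
        rw [show parabM c ^ m = parabM ((m:ℝ)*c) from parabM_pow c m] at hN ⊢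
        linarith
  have ham0 : (0:ℝ) ≤ amax := le_trans zero_le_one ham1
  set aT : T1 := ((α : ℝ) : T1) with haT
  set G : ℕ → M2R := fun j => Am * (1 + F (p.1 + j • aT)) with hG
  have hGdet : ∀ j, (G j).det = 1 := fun j => by
    rw [hG]
    dsimp only
    rw [Matrix.det_mul, hdet, hFdet _, one_mul]
  have hAm1 : opNorm Am ≤ amax := by
    have := hamk 1 hm1
    rwa [pow_one] at this
  have hGsub : ∀ i, opNorm (G i - Am) ≤ amax * f := by
    intro i
    have hGi : G i - Am = Am * F (p.1 + i • aT) := by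
      rw [hG]
      dsimp only
      rw [mul_add, mul_one]
      abel
    rw [hGi]
    calc opNorm (Am * F (p.1 + i • aT)) ≤ opNorm Am * opNorm (F (p.1 + i • aT)) :=
        opNorm_mul_le' _ _
      _ ≤ amax * f := mul_le_mul hAm1 (hFb _) (opNorm_nonneg' _) ham0
  have hsmall : 2 * amax ^ 2 * f * (m:ℝ) ≤ 1 := by
    have h1 : amax ^ 2 ≤ 4 * (m:ℝ)^2 := by nlinarith
    have h2 : 2 * amax ^ 2 * f * (m:ℝ) ≤ 2 * (4 * (m:ℝ)^2) * f * (m:ℝ) := by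
      have h3 : amax^2 * f ≤ (4*(m:ℝ)^2) * f := mul_le_mul_of_nonneg_right h1 hf0
      nlinarith
    have h4 : 2 * (4 * (m:ℝ)^2) * f * (m:ℝ) = 8 * ((m:ℝ)^3 * f) := by ring
    have h5 : 64 * ((m:ℝ)^3 * f) ≤ 1 := by
      calc 64 * ((m:ℝ)^3 * f) = 64 * (m:ℝ)^3 * f := by ring
        _ ≤ 1 := hm
    have h6 : 0 ≤ (m:ℝ)^3 * f := by positivity
    linarith
  have hPle : ∀ j, j ≤ m → opNorm (Pseq G j) ≤ 2 * amax :=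
    Pseq_norm_le Am G amax f m hamk hGsub hf0 ham1 hsmall
  -- bookkeeping of the iterates
  have hfst0 : dist ((TprojT aT (fun _ => Am))^[m] p).1
      ((TprojT aT (fun θ => Am * (1 + F θ)))^[m] p).1 = 0 := by
    rw [TprojT_iterate_fst, TprojT_iterate_fst, dist_self]
  have hsnd1 : ((TprojT aT (fun _ => Am))^[m] p).2 = projAct (Am ^ m) p.2 := by
    rw [TprojT_iterate_snd aT (fun _ => Am) (fun _ => hdet) p m, Pseq_const]
  have hsnd2 : ((TprojT aT (fun θ => Am * (1 + F θ)))^[m] p).2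
      = projAct (Pseq G m) p.2 := by
    rw [TprojT_iterate_snd aT (fun θ => Am * (1 + F θ))
      (fun θ => by rw [Matrix.det_mul, hdet, hFdet θ, one_mul]) p m]
  -- chain of intermediate points
  set x : ℕ → RP1 := fun j => projAct (Am ^ (m - j) * Pseq G j) p.2 with hx
  have hx0 : x 0 = projAct (Am ^ m) p.2 := by
    rw [hx]
    dsimp only
    rw [show Pseq G 0 = 1 from rfl, mul_one, Nat.sub_zero]
  have hxm : x m = projAct (Pseq G m) p.2 := by
    rw [hx]
    dsimp only
    rw [Nat.sub_self, pow_zero, one_mul]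
  have hstep : ∀ j, j < m → dist (x j) (x (j+1)) ≤ π/2 * amax^5 * f := by
    intro j hj
    have hPj : (Pseq G j).det = 1 := Pseq_det hGdet j
    have hde1 : (Am * Pseq G j).det = 1 := by rw [Matrix.det_mul, hdet, hPj, mul_one]
    have hde2 : (G j * Pseq G j).det = 1 := by rw [Matrix.det_mul, hGdet j, hPj, mul_one]
    have e1 : Am ^ (m - j) * Pseq G j = Am ^ (m - 1 - j) * (Am * Pseq G j) := by
      have hmj : m - j = (m - 1 - j) + 1 := by omega
      rw [hmj, pow_succ, mul_assoc]
    have e2 : Am ^ (m - (j+1)) * Pseq G (j+1) = Am ^ (m - 1 - j) * (G j * Pseq G j) := by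
      have hmj : m - (j+1) = m - 1 - j := by omega
      rw [hmj]
      rfl
    have hxj : x j = projAct (Am ^ (m-1-j)) (projAct (Am * Pseq G j) p.2) := by
      rw [hx]
      dsimp only
      rw [e1, projAct_mul (hdetpow _) hde1]
    have hxj1 : x (j+1) = projAct (Am ^ (m-1-j)) (projAct (G j * Pseq G j) p.2) := by
      rw [hx]
      dsimp only
      rw [e2, projAct_mul (hdetpow _) hde2]
    have hinner : dist (projAct (Am * Pseq G j) p.2) (projAct (G j * Pseq G j) p.2)
        ≤ 2*amax * (2*amax^2*f) / 4 := by
      have hstep' := projAct_step hde1 hde2 p.2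
      have hdiff : G j * Pseq G j - Am * Pseq G j = (G j - Am) * Pseq G j := by
        rw [sub_mul]
      have h1 : opNorm (G j * Pseq G j) ≤ 2*amax := by
        have hPs : G j * Pseq G j = Pseq G (j+1) := rfl
        rw [hPs]
        exact hPle (j+1) (by omega)
      have h2 : opNorm (G j * Pseq G j - Am * Pseq G j) ≤ 2*amax^2*f := by
        rw [hdiff]
        calc opNorm ((G j - Am) * Pseq G j)
            ≤ opNorm (G j - Am) * opNorm (Pseq G j) := opNorm_mul_le' _ _
          _ ≤ (amax*f) * (2*amax) := mul_le_mul (hGsub j) (hPle j (by omega))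
              (opNorm_nonneg' _) (mul_nonneg ham0 hf0)
          _ = 2*amax^2*f := by ring
      have h3 : opNorm (G j * Pseq G j) * opNorm (G j * Pseq G j - Am * Pseq G j)
          ≤ (2*amax) * (2*amax^2*f) :=
        mul_le_mul h1 h2 (opNorm_nonneg' _) (by positivity)
      calc dist (projAct (Am * Pseq G j) p.2) (projAct (G j * Pseq G j) p.2)
          ≤ opNorm (G j * Pseq G j) * opNorm (G j * Pseq G j - Am * Pseq G j) / 4 := hstep'
        _ ≤ 2*amax * (2*amax^2*f) / 4 := by linarith
    rw [hxj, hxj1]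
    calc dist (projAct (Am ^ (m-1-j)) (projAct (Am * Pseq G j) p.2))
          (projAct (Am ^ (m-1-j)) (projAct (G j * Pseq G j) p.2))
        ≤ π/2 * opNorm (Am ^ (m-1-j)) ^ 2 *
          dist (projAct (Am * Pseq G j) p.2) (projAct (G j * Pseq G j) p.2) :=
          projAct_lipschitz (hdetpow _) _ _
      _ ≤ π/2 * amax^2 * (2*amax * (2*amax^2*f) / 4) := by
          apply mul_le_mul _ hinner dist_nonneg (by positivity)
          apply mul_le_mul_of_nonneg_left _ (by positivity : (0:ℝ) ≤ π/2)
          exact pow_le_pow_left₀ (opNorm_nonneg' _) (hamk _ (by omega)) 2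
      _ = π/2 * amax^5 * f := by ring
  have hchain := dist_le_range_sum_dist x m
  have hsum : ∑ i ∈ Finset.range m, dist (x i) (x (i+1)) ≤ (m:ℝ) * (π/2 * amax^5 * f) := by
    calc ∑ i ∈ Finset.range m, dist (x i) (x (i+1))
        ≤ ∑ _i ∈ Finset.range m, (π/2 * amax^5 * f) :=
          Finset.sum_le_sum (fun i hi => hstep i (Finset.mem_range.mp hi))
      _ = (m:ℝ) * (π/2 * amax^5 * f) := by
          rw [Finset.sum_const, Finset.card_range, nsmul_eq_mul]
  have hfinal : (m:ℝ) * (π/2 * amax^5 * f) ≤ 16 * 4 * (m:ℝ)^3 * N^4 * f := by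
    have hN0 : (0:ℝ) ≤ N := le_trans zero_le_one hN1
    have hπ4 : π ≤ 4 := by linarith [Real.pi_le_four]
    have h5 : amax^5 ≤ 32 * (m:ℝ) * N^4 := by
      have h4 : amax^4 ≤ (2*N)^4 := pow_le_pow_left₀ ham0 ham2A 4
      calc amax^5 = amax * amax^4 := by ring
        _ ≤ (2*(m:ℝ)) * (2*N)^4 := mul_le_mul ham2m h4 (pow_nonneg ham0 4) (by positivity)
        _ = 32 * (m:ℝ) * N^4 := by ring
    have hstep2 : π/2 * amax^5 * f ≤ 4/2 * (32*(m:ℝ)*N^4) * f := by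
      apply mul_le_mul_of_nonneg_right _ hf0
      apply mul_le_mul (by linarith) h5 (pow_nonneg ham0 5) (by norm_num)
    have h23 : (m:ℝ)^2 ≤ (m:ℝ)^3 := by nlinarith [hm1R, hm0]
    calc (m:ℝ) * (π/2 * amax^5 * f) ≤ (m:ℝ) * (4/2 * (32*(m:ℝ)*N^4) * f) :=
        mul_le_mul_of_nonneg_left hstep2 hm0
      _ = 64 * ((m:ℝ)^2 * (N^4 * f)) := by ring
      _ ≤ 64 * ((m:ℝ)^3 * (N^4 * f)) := by
          have hq : 0 ≤ N^4 * f := mul_nonneg (pow_nonneg hN0 4) hf0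
          have := mul_le_mul_of_nonneg_right h23 hq
          linarith
      _ = 16 * 4 * (m:ℝ)^3 * N^4 * f := by ring
  rw [Prod.dist_eq, hfst0, max_eq_right dist_nonneg, hsnd1, hsnd2, ← hx0, ← hxm]
  calc dist (x 0) (x m) ≤ ∑ i ∈ Finset.range m, dist (x i) (x (i+1)) := hchain
    _ ≤ (m:ℝ) * (π/2 * amax^5 * f) := hsum
    _ ≤ 16 * 4 * (m:ℝ)^3 * N^4 * f := hfinal


end Paper

end
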